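/- arXiv:2206.10913 — 3 statements merged into one kernel-verified Lean document; each statement's English description precedes it below -/
import Mathlib

section
/- Let f(Z) = c_α Z^α + c_β Z^β be a psd-stable binomial (c_α, c_β ≠ 0, α ≠ β) in the entries of a symmetric n×n matrix of variables Z. Then the total degrees of the two monomials Z^α and Z^β differ by at most 2. -/
open MvPolynomial

/-- Variables of a symmetric `n×n` matrix of variables: pairs `(i,j)` with `i ≤ j`. -/
abbrev SymVar (n : ℕ) := {p : Fin n × Fin n // p.1 ≤ p.2}

/-- Evaluation of a polynomial in the entries of a symmetric matrix of variables
at a complex matrix `M` (the variable `z_ij` is sent to `M i j`). -/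
noncomputable def evalMat {n : ℕ} (M : Matrix (Fin n) (Fin n) ℂ)
    (f : MvPolynomial (SymVar n) ℂ) : ℂ :=
  eval (fun v : SymVar n => M v.1.1 v.1.2) f

/-- A polynomial in the entries of a symmetric `n×n` matrix of variables is
psd-stable if it does not vanish at any complex symmetric matrix whose
entrywise imaginary part is positive definite. -/
def PsdStable {n : ℕ} (f : MvPolynomial (SymVar n) ℂ) : Prop :=
  ∀ M : Matrix (Fin n) (Fin n) ℂ, M.IsSymm → (M.map Complex.im).PosDef →
    evalMat M f ≠ 0

/-- The total degree of a monomial recorded by its exponent function: the sum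
of the exponents of all variables. -/
def mdeg {n : ℕ} (α : SymVar n →₀ ℕ) : ℕ := α.sum fun _ e => e

lemma build_root (c : ℂ) (hc : c ≠ 0) (k : ℕ) (j : ℕ)
    (h1 : 0 < (c.arg + 2*Real.pi*j)/k) (h2 : (c.arg + 2*Real.pi*j)/k < Real.pi) :
    ∃ w : ℂ, 0 < w.im ∧ w ^ k = c := by
  have hk0 : k ≠ 0 := by rintro rfl; simp at h1
  have hk : (k : ℂ) ≠ 0 := Nat.cast_ne_zero.mpr hk0
  have hkr : (k : ℝ) ≠ 0 := Nat.cast_ne_zero.mpr hk0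
  refine ⟨Complex.exp ((Real.log (‖c‖) / k : ℝ)
      + (((c.arg + 2*Real.pi*j)/k : ℝ) : ℂ) * Complex.I), ?_, ?_⟩
  · rw [Complex.exp_im]
    apply mul_pos (Real.exp_pos _)
    have him : ((Real.log (‖c‖) / k : ℝ)
        + (((c.arg + 2*Real.pi*j)/k : ℝ) : ℂ) * Complex.I).im = (c.arg + 2*Real.pi*j)/k := by simp
    rw [him]
    exact Real.sin_pos_of_pos_of_lt_pi h1 h2
  · rw [← Complex.exp_nat_mul]
    have : (k : ℂ) * ((Real.log (‖c‖) / k : ℝ)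
        + (((c.arg + 2*Real.pi*j)/k : ℝ) : ℂ) * Complex.I)
        = (Real.log (‖c‖) : ℝ) + (c.arg : ℝ) * Complex.I
          + (j : ℂ) * (2*Real.pi*Complex.I) := by
      push_cast
      field_simp
      ring
    rw [this, Complex.exp_add, Complex.exp_nat_mul, Complex.exp_two_pi_mul_I, one_pow, mul_one,
      Complex.exp_add, ← Complex.ofReal_exp, Real.exp_log (norm_pos_iff.mpr hc),
      Complex.norm_mul_exp_arg_mul_I]

lemma exists_root_upper (c : ℂ) (hc : c ≠ 0) (k : ℕ) (hk : 3 ≤ k) :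
    ∃ w : ℂ, 0 < w.im ∧ w ^ k = c := by
  have hkr : (0:ℝ) < (k:ℝ) := by positivity
  have hπ := Real.pi_pos
  have harg1 := Complex.neg_pi_lt_arg c
  have harg2 := Complex.arg_le_pi c
  have hk3 : (3:ℝ) ≤ (k:ℝ) := by exact_mod_cast hk
  rcases lt_or_ge 0 c.arg with h | h
  · refine build_root c hc k 0 ?_ ?_
    · push_cast; positivity
    · push_cast
      rw [div_lt_iff₀ hkr]
      nlinarith
  · refine build_root c hc k 1 ?_ ?_
    · push_cast
      apply div_pos ?_ hkr
      nlinarith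
    · push_cast
      rw [div_lt_iff₀ hkr]
      nlinarith

lemma key_deg (A B : ℂ) (hA : A ≠ 0) (hB : B ≠ 0) (p q : ℕ)
    (h : ∀ w : ℂ, 0 < w.im → A * w ^ p + B * w ^ q ≠ 0) : p ≤ q + 2 := by
  by_contra hlt
  push_neg at hlt
  have hc : -B/A ≠ 0 := div_ne_zero (neg_ne_zero.mpr hB) hA
  obtain ⟨w, hw, hwk⟩ := exists_root_upper (-B/A) hc (p - q) (by omega)
  apply h w hw
  have hpq : p = q + (p - q) := by omega
  rw [hpq, pow_add, hwk]
  field_simp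
  ring

lemma posdef_aux {n : ℕ} {t : ℝ} (ht : 0 < t) :
    (Matrix.of fun i j : Fin n => t * (if i = j then 2 else 1)).PosDef := by
  rw [Matrix.posDef_iff_dotProduct_mulVec]
  constructor
  · ext i j
    simp [Matrix.conjTranspose, Matrix.IsHermitian, eq_comm]
  · intro x hx
    have hS : ∀ i, (Matrix.of fun i j : Fin n => t * (if i = j then 2 else 1)).mulVec x i
        = t * ((∑ j, x j) + x i) := by
      intro i
      simp only [Matrix.mulVec, dotProduct, Matrix.of_apply]
      have : ∀ j : Fin n, (t * if i = j then 2 else 1) * x j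
          = t * x j + t * (if i = j then x j else 0) := by
        intro j; by_cases h : i = j <;> simp [h] <;> ring
      simp only [this]
      rw [Finset.sum_add_distrib, ← Finset.mul_sum, ← Finset.mul_sum,
        Finset.sum_ite_eq, if_pos (Finset.mem_univ i), mul_add]
    have hdot : dotProduct (star x)
        ((Matrix.of fun i j : Fin n => t * (if i = j then 2 else 1)).mulVec x)
        = t * ((∑ j, x j)^2 + ∑ i, (x i)^2) := by
      simp only [dotProduct, Pi.star_apply, star_trivial, hS]
      rw [mul_add, sq, Finset.sum_mul, Finset.mul_sum, Finset.mul_sum, ← Finset.sum_add_distrib]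
      apply Finset.sum_congr rfl
      intro i _
      ring
    rw [hdot]
    apply mul_pos ht
    have h1 : 0 < ∑ i, (x i)^2 := by
      obtain ⟨i, hi⟩ := Function.ne_iff.mp hx
      apply Finset.sum_pos' (fun i _ => sq_nonneg _)
        ⟨i, Finset.mem_univ i, by simpa [sq_pos_iff] using hi⟩
    positivity

lemma eval_mono' {n : ℕ} (w : ℂ) (γ : SymVar n →₀ ℕ) (c : ℂ) (m : SymVar n → ℂ) :
    eval (fun v => w * m v) (monomial γ c)
      = c * (w ^ mdeg γ * γ.prod fun v e => m v ^ e) := by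
  rw [eval_monomial]
  congr 1
  unfold mdeg Finsupp.prod Finsupp.sum
  simp_rw [mul_pow]
  rw [Finset.prod_mul_distrib, Finset.prod_pow_eq_pow_sum]

/-- The total degrees of the two monomials of a psd-stable binomial differ by
at most 2. -/
theorem psdStable_binomial_degree_gap {n : ℕ} (α β : SymVar n →₀ ℕ)
    (cα cβ : ℂ) (hcα : cα ≠ 0) (hcβ : cβ ≠ 0) (hne : α ≠ β)
    (hf : PsdStable (monomial α cα + monomial β cβ)) :
    mdeg α ≤ mdeg β + 2 ∧ mdeg β ≤ mdeg α + 2 := by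
  set m : SymVar n → ℂ := fun v => if (v.1.1 : Fin n) = v.1.2 then 2 else 1 with hm
  have hmne : ∀ v, m v ≠ 0 := by
    intro v
    by_cases h : (v.1.1 : Fin n) = v.1.2 <;> simp [hm, h]
  set aα : ℂ := α.prod fun v e => m v ^ e with haα
  set aβ : ℂ := β.prod fun v e => m v ^ e with haβ
  have haαne : aα ≠ 0 := Finsupp.prod_ne_zero_iff.mpr fun v _ => pow_ne_zero _ (hmne v)
  have haβne : aβ ≠ 0 := Finsupp.prod_ne_zero_iff.mpr fun v _ => pow_ne_zero _ (hmne v)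
  have key : ∀ w : ℂ, 0 < w.im →
      (cα * aα) * w ^ mdeg α + (cβ * aβ) * w ^ mdeg β ≠ 0 := by
    intro w hw
    have hsymm : (Matrix.of fun i j : Fin n => w * (if i = j then 2 else 1)).IsSymm := by
      ext i j
      simp [Matrix.IsSymm, eq_comm]
    have hmap : ((Matrix.of fun i j : Fin n => w * (if i = j then 2 else 1)).map Complex.im)
        = Matrix.of fun i j : Fin n => w.im * (if i = j then 2 else 1) := by
      ext i j
      by_cases h : i = j <;> simp [h, Complex.mul_im]
    have hpd : ((Matrix.of fun i j : Fin n => w * (if i = j then 2 else 1)).map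
        Complex.im).PosDef := by
      rw [hmap]; exact posdef_aux hw
    have := hf _ hsymm hpd
    have heval : evalMat (Matrix.of fun i j : Fin n => w * (if i = j then 2 else 1))
        (monomial α cα + monomial β cβ)
        = (cα * aα) * w ^ mdeg α + (cβ * aβ) * w ^ mdeg β := by
      unfold evalMat
      have hfn : (fun v : SymVar n =>
          (Matrix.of fun i j : Fin n => w * (if i = j then 2 else 1)) v.1.1 v.1.2)
          = fun v => w * m v := by
        funext v
        simp [hm]
      rw [map_add, hfn, eval_mono', eval_mono', ← haα, ← haβ]
      ring
    rw [heval] at this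
    exact this
  constructor
  · exact key_deg _ _ (mul_ne_zero hcα haαne) (mul_ne_zero hcβ haβne) _ _ key
  · exact key_deg _ _ (mul_ne_zero hcβ haβne) (mul_ne_zero hcα haαne) _ _
      fun w hw => by rw [add_comm]; exact key w hw
end

section
/- Let f(Z) = c_α Z^α + c_β Z^β be a binomial (c_α, c_β ≠ 0) in the entries of a symmetric n×n matrix of variables Z such that the two monomials Z^α and Z^β have no common factor and the total degrees satisfy deg(Z^α) > deg(Z^β) ≥ 1. Then f is not psd-stable. -/
open MvPolynomial

lemma consumer {n : ℕ} (α β : SymVar n →₀ ℕ) (cα cβ : ℂ) (hcα : cα ≠ 0) (hcβ : cβ ≠ 0)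
    (hnc : ∀ v : SymVar n, α v = 0 ∨ β v = 0) (hdeg : mdeg β < mdeg α)
    (y : SymVar n → ℝ) (k : ℤ) (u : SymVar n) (hu : u ∈ α.support ∪ β.support)
    (hy1 : ∀ v ∈ α.support ∪ β.support, v.1.1 = v.1.2 → 0 < Real.sin (y v))
    (hy2 : ∀ v ∈ α.support ∪ β.support, v.1.1 ≠ v.1.2 → v ≠ u → y v = 0)
    (hsum : ∑ v ∈ α.support ∪ β.support, (((α v : ℝ) - β v) * y v)
      = (Complex.log (-cβ/cα)).im + 2*Real.pi*k) :
    ¬ PsdStable (monomial α cα + monomial β cβ) := by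
  classical
  intro hstab
  set w : ℂ := -cβ/cα with hw_def
  have hw : w ≠ 0 := by
    simp only [hw_def, ne_eq, div_eq_zero_iff, neg_eq_zero, not_or]
    exact ⟨hcβ, hcα⟩
  set L : ℂ := Complex.log w with hL_def
  set S : Finset (SymVar n) := α.support ∪ β.support with hS_def
  have hAB : Disjoint α.support β.support := by
    rw [Finset.disjoint_left]
    intro v hvA hvB
    rcases hnc v with h | h
    · exact (Finsupp.mem_support_iff.mp hvA) h
    · exact (Finsupp.mem_support_iff.mp hvB) h
  have hab : ((mdeg α : ℝ) - mdeg β) ≠ 0 := by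
    have : (mdeg β : ℝ) < mdeg α := by exact_mod_cast hdeg
    linarith
  set δ : SymVar n → ℝ := fun v =>
    if v.1.1 = v.1.2 ∧ v ∈ S then Real.log (2 / Real.sin (y v)) else 0 with hδ_def
  set Dδ : ℝ := ∑ v ∈ S, ((α v : ℝ) - β v) * δ v with hDδ_def
  set x₀ : ℝ := (L.re - Dδ) / ((mdeg α : ℝ) - mdeg β) with hx₀_def
  set E : ℝ := Real.exp x₀ with hE_def
  have hE : 0 < E := Real.exp_pos _
  set cc : SymVar n → ℂ := fun v => (↑(x₀ + δ v) + ↑(y v) * Complex.I) with hcc_def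
  set mval : SymVar n → ℂ := fun v =>
    if v ∈ S then Complex.exp (cc v) else
      if v.1.1 = v.1.2 then 2*E*Complex.I else 0 with hmval_def
  set M : Matrix (Fin n) (Fin n) ℂ := fun i j =>
    if h : i ≤ j then mval ⟨(i,j), h⟩ else mval ⟨(j,i), le_of_not_ge h⟩ with hM_def
  have hentry : ∀ v : SymVar n, M v.1.1 v.1.2 = mval v := by
    intro ⟨⟨i,j⟩, hij⟩
    simp [hM_def, hij]
  have hsymm : M.IsSymm := by
    rw [Matrix.IsSymm]
    ext i j
    rw [Matrix.transpose_apply]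
    by_cases h : i ≤ j <;> by_cases h' : j ≤ i
    · have : i = j := le_antisymm h h'
      subst this; rfl
    · simp [hM_def, h, h']
    · simp [hM_def, h, h']
    · exact absurd (le_of_not_ge h) h'
  have hccre : ∀ v, (cc v).re = x₀ + δ v := by intro v; simp [hcc_def]
  have hccim : ∀ v, (cc v).im = y v := by intro v; simp [hcc_def]
  have hdiagim : ∀ v : SymVar n, v.1.1 = v.1.2 → (mval v).im = 2*E := by
    intro v hv
    by_cases hvS : v ∈ S
    · have hsin := hy1 v hvS hv
      have hδv : δ v = Real.log (2 / Real.sin (y v)) := by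
        simp [hδ_def, hv, hvS]
      simp only [hmval_def, if_pos hvS]
      rw [Complex.exp_im, hccre, hccim, hδv, Real.exp_add, ← hE_def,
        Real.exp_log (by positivity), mul_assoc, div_mul_cancel₀ _ (ne_of_gt hsin)]
      ring
    · simp only [hmval_def, if_neg hvS, if_pos hv]
      simp
  have hoffim : ∀ v : SymVar n, v.1.1 ≠ v.1.2 → v ≠ u → (mval v).im = 0 := by
    intro v hv hvu
    by_cases hvS : v ∈ S
    · have hyv : y v = 0 := hy2 v hvS hv hvu
      simp only [hmval_def, if_pos hvS]
      rw [Complex.exp_im, hccim, hyv, Real.sin_zero, mul_zero]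
    · simp [hmval_def, if_neg hvS, hv]
  set γ : ℝ := if u.1.1 = u.1.2 then 0 else (mval u).im with hγ_def
  have hγle : |γ| ≤ E := by
    by_cases hud : u.1.1 = u.1.2
    · simp [hγ_def, hud]; exact le_of_lt hE
    · have hδu : δ u = 0 := by simp [hδ_def, hud]
      have hmu : (mval u).im = E * Real.sin (y u) := by
        simp only [hmval_def, if_pos hu]
        rw [Complex.exp_im, hccre, hccim, hδu, add_zero, ← hE_def]
      rw [hγ_def, if_neg hud, hmu, abs_mul, abs_of_pos hE]
      calc E * |Real.sin (y u)| ≤ E * 1 :=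
            mul_le_mul_of_nonneg_left (abs_le.mpr ⟨Real.neg_one_le_sin _, Real.sin_le_one _⟩) (le_of_lt hE)
        _ = E := mul_one E
  have hN : ∀ i j, (M.map Complex.im) i j =
      (if i = j then 2*E else 0) +
      (if (i = u.1.1 ∧ j = u.1.2) ∨ (i = u.1.2 ∧ j = u.1.1) then γ else 0) := by
    intro i j
    rw [Matrix.map_apply]
    by_cases hij : i = j
    · subst hij
      have hMii : M i i = mval ⟨(i,i), le_refl i⟩ := by simp [hM_def]
      rw [hMii, hdiagim ⟨(i,i), le_refl i⟩ rfl, if_pos rfl]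
      by_cases hc : (i = u.1.1 ∧ i = u.1.2) ∨ (i = u.1.2 ∧ i = u.1.1)
      · have hud : u.1.1 = u.1.2 := by
          rcases hc with ⟨h1,h2⟩|⟨h1,h2⟩
          · rw [← h1, ← h2]
          · rw [← h2, ← h1]
        simp [hγ_def, hud, hc]
      · simp [hc]
    · rw [if_neg hij, zero_add]
      by_cases h : i ≤ j
      · have hMv : M i j = mval ⟨(i,j), h⟩ := by simp [hM_def, h]
        by_cases hvu : (⟨(i,j), h⟩ : SymVar n) = u
        · have h1 : i = u.1.1 := by rw [← hvu]
          have h2 : j = u.1.2 := by rw [← hvu]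
          have hud : ¬ u.1.1 = u.1.2 := by rw [← h1, ← h2]; exact hij
          rw [hMv, hvu, if_pos (Or.inl ⟨h1, h2⟩), hγ_def, if_neg hud]
        · rw [hMv, hoffim ⟨(i,j), h⟩ hij hvu, if_neg]
          rintro (⟨h1,h2⟩|⟨h1,h2⟩)
          · exact hvu (Subtype.ext (Prod.ext_iff.mpr ⟨h1, h2⟩))
          · have hle : j ≤ i := by rw [h1, h2]; exact u.2
            exact hij (le_antisymm h hle)
      · have hji : j ≤ i := le_of_not_ge h
        have hMv : M i j = mval ⟨(j,i), hji⟩ := by simp [hM_def, h]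
        have hjine : ¬ (j = i) := fun hh => hij hh.symm
        by_cases hvu : (⟨(j,i), hji⟩ : SymVar n) = u
        · have h1 : j = u.1.1 := by rw [← hvu]
          have h2 : i = u.1.2 := by rw [← hvu]
          have hud : ¬ u.1.1 = u.1.2 := by rw [← h1, ← h2]; exact hjine
          rw [hMv, hvu, if_pos (Or.inr ⟨h2, h1⟩), hγ_def, if_neg hud]
        · rw [hMv, hoffim ⟨(j,i), hji⟩ hjine hvu, if_neg]
          rintro (⟨h1,h2⟩|⟨h1,h2⟩)
          · exact h (by rw [h1, h2]; exact u.2)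
          · exact hvu (Subtype.ext (Prod.ext_iff.mpr ⟨h2, h1⟩))
  have hherm : (M.map Complex.im).IsHermitian := by
    ext i j
    rw [Matrix.conjTranspose_apply, star_trivial]
    have hsymij : M j i = M i j := congrFun (congrFun hsymm i) j
    rw [Matrix.map_apply, Matrix.map_apply, hsymij]
  have hxx_pos : ∀ x : Fin n → ℝ, x ≠ 0 → 0 < ∑ i, x i ^ 2 := by
    intro x hx
    obtain ⟨i0, hi0⟩ := Function.ne_iff.mp hx
    exact Finset.sum_pos' (fun i _ => sq_nonneg _)
      ⟨i0, Finset.mem_univ _, pow_two_pos_of_ne_zero hi0⟩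
  have hpos : (M.map Complex.im).PosDef := by
    refine Matrix.PosDef.of_dotProduct_mulVec_pos hherm (fun x hx => ?_)
    have hsx : star x = x := funext fun i => star_trivial _
    rw [hsx]
    by_cases hud : u.1.1 = u.1.2
    · have hγ0 : γ = 0 := by simp [hγ_def, hud]
      have hN' : ∀ i j, (M.map Complex.im) i j = (if i = j then 2*E else 0) := by
        intro i j; rw [hN i j, hγ0]; simp
      have hform : dotProduct x ((M.map Complex.im).mulVec x) = 2*E*(∑ i, x i^2) := by
        simp only [dotProduct, Matrix.mulVec, hN']
        simp only [ite_mul, zero_mul, Finset.sum_ite_eq, Finset.mem_univ, if_true,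
          Finset.mul_sum]
        exact Finset.sum_congr rfl (fun i _ => by ring)
      rw [hform]
      have := hxx_pos x hx
      positivity
    · have hrow : ∀ i, (∑ j, ((if i = j then 2*E else 0) +
          (if (i = u.1.1 ∧ j = u.1.2) ∨ (i = u.1.2 ∧ j = u.1.1) then γ else 0)) * x j)
          = 2*E*x i + (if i = u.1.1 then γ * x u.1.2 else 0)
            + (if i = u.1.2 then γ * x u.1.1 else 0) := by
        intro i
        simp only [add_mul, ite_mul, zero_mul, Finset.sum_add_distrib, Finset.sum_ite_eq,
          Finset.mem_univ, if_true]
        by_cases hi1 : i = u.1.1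
        · have hi2 : ¬ i = u.1.2 := fun h => hud (hi1.symm.trans h)
          simp [hi1, hi2, hud, Finset.sum_ite_eq', ite_and]
        · by_cases hi2 : i = u.1.2
          · have hne' : ¬ u.1.2 = u.1.1 := fun h => hud h.symm
            simp [hi1, hi2, hne', Finset.sum_ite_eq', ite_and]
          · simp [hi1, hi2, ite_and]
      have hform : dotProduct x ((M.map Complex.im).mulVec x)
          = 2*E*(∑ i, x i^2) + γ*(x u.1.1 * x u.1.2) + γ*(x u.1.2 * x u.1.1) := by
        simp only [dotProduct, Matrix.mulVec, hN]
        rw [Finset.sum_congr rfl (fun i _ => by rw [hrow i])]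
        simp only [mul_add, Finset.sum_add_distrib, mul_ite, mul_zero, Finset.sum_ite_eq',
          Finset.mem_univ, if_true, Finset.mul_sum]
        have : ∀ i ∈ Finset.univ, x i * (2*E*x i) = 2*E*x i^2 := fun i _ => by ring
        rw [Finset.sum_congr rfl this]
        ring
      rw [hform]
      have hxx := hxx_pos x hx
      have hpair : x u.1.1^2 + x u.1.2^2 ≤ ∑ i, x i^2 := by
        have h1 : x u.1.1^2 + x u.1.2^2 = ∑ i ∈ ({u.1.1, u.1.2} : Finset (Fin n)), x i^2 := by
          rw [Finset.sum_pair hud]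
        rw [h1]
        exact Finset.sum_le_sum_of_subset_of_nonneg (Finset.subset_univ _)
          (fun i _ _ => sq_nonneg _)
      obtain ⟨hγ1, hγ2⟩ := abs_le.mp hγle
      nlinarith [mul_nonneg (by linarith : (0:ℝ) ≤ E - γ) (sq_nonneg (x u.1.1 - x u.1.2)),
        mul_nonneg (by linarith : (0:ℝ) ≤ E + γ) (sq_nonneg (x u.1.1 + x u.1.2))]
  set Sa : ℂ := ∑ v ∈ α.support, (α v : ℂ) * cc v with hSa_def
  set Sb : ℂ := ∑ v ∈ β.support, (β v : ℂ) * cc v with hSb_def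
  have hmval_exp : ∀ v ∈ S, mval v = Complex.exp (cc v) := by
    intro v hv; simp [hmval_def, hv]
  have hprodα : (α.prod fun v e => mval v ^ e) = Complex.exp Sa := by
    rw [Finsupp.prod, hSa_def, Complex.exp_sum]
    refine Finset.prod_congr rfl (fun v hv => ?_)
    rw [hmval_exp v (Finset.mem_union_left _ hv), ← Complex.exp_nat_mul]
  have hprodβ : (β.prod fun v e => mval v ^ e) = Complex.exp Sb := by
    rw [Finsupp.prod, hSb_def, Complex.exp_sum]
    refine Finset.prod_congr rfl (fun v hv => ?_)
    rw [hmval_exp v (Finset.mem_union_right _ hv), ← Complex.exp_nat_mul]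
  have hSa' : Sa = ∑ v ∈ S, (α v : ℂ) * cc v := by
    refine Finset.sum_subset Finset.subset_union_left (fun v _ hv => ?_)
    rw [Finsupp.notMem_support_iff.mp hv]; simp
  have hSb' : Sb = ∑ v ∈ S, (β v : ℂ) * cc v := by
    refine Finset.sum_subset Finset.subset_union_right (fun v _ hv => ?_)
    rw [Finsupp.notMem_support_iff.mp hv]; simp
  have hsa : ∑ v ∈ S, (α v : ℝ) = (mdeg α : ℝ) := by
    have h1 : ∑ v ∈ α.support, (α v : ℝ) = ∑ v ∈ S, (α v : ℝ) :=
      Finset.sum_subset Finset.subset_union_left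
        (fun v _ hv => by rw [Finsupp.notMem_support_iff.mp hv]; simp)
    rw [← h1, mdeg, Finsupp.sum]
    push_cast
    rfl
  have hsb : ∑ v ∈ S, (β v : ℝ) = (mdeg β : ℝ) := by
    have h1 : ∑ v ∈ β.support, (β v : ℝ) = ∑ v ∈ S, (β v : ℝ) :=
      Finset.sum_subset Finset.subset_union_right
        (fun v _ hv => by rw [Finsupp.notMem_support_iff.mp hv]; simp)
    rw [← h1, mdeg, Finsupp.sum]
    push_cast
    rfl
  have hRsum : ∑ v ∈ S, ((α v : ℝ) - β v) * (x₀ + δ v) = L.re := by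
    have expand : ∀ v ∈ S, ((α v : ℝ) - β v) * (x₀ + δ v)
        = ((α v : ℝ) - β v) * x₀ + ((α v : ℝ) - β v) * δ v := fun v _ => by ring
    rw [Finset.sum_congr rfl expand, Finset.sum_add_distrib, ← Finset.sum_mul, ← hDδ_def]
    have h2 : ∑ v ∈ S, ((α v:ℝ) - β v) = (mdeg α : ℝ) - mdeg β := by
      rw [Finset.sum_sub_distrib, hsa, hsb]
    rw [h2, hx₀_def]
    field_simp
    ring
  have hkey : Sa - Sb = (↑(L.re) : ℂ) + (↑(L.im + 2*Real.pi*(k:ℝ)) : ℂ) * Complex.I := by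
    rw [hSa', hSb', ← Finset.sum_sub_distrib]
    have expand : ∀ v ∈ S, ((α v:ℂ) * cc v - (β v:ℂ) * cc v)
        = ((((α v : ℝ) - β v) * (x₀ + δ v) : ℝ) : ℂ)
          + ((((α v : ℝ) - β v) * y v : ℝ) : ℂ) * Complex.I := by
      intro v _
      rw [hcc_def]
      push_cast
      ring
    rw [Finset.sum_congr rfl expand, Finset.sum_add_distrib, ← Complex.ofReal_sum,
      ← Finset.sum_mul, ← Complex.ofReal_sum, hRsum, hsum]
  have hexp : Complex.exp (Sa - Sb) = w := by
    rw [hkey]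
    have hsplit : (↑(L.re) : ℂ) + (↑(L.im + 2*Real.pi*(k:ℝ)) : ℂ) * Complex.I
        = L + (k:ℂ) * (2*(Real.pi:ℂ)*Complex.I) := by
      apply Complex.ext <;> push_cast <;>
        simp [Complex.add_re, Complex.add_im, Complex.mul_re, Complex.mul_im,
          Complex.I_re, Complex.I_im, Complex.ofReal_re, Complex.ofReal_im] <;> ring
    rw [hsplit, Complex.exp_add, Complex.exp_log hw, Complex.exp_int_mul_two_pi_mul_I, mul_one]
  have heval : evalMat M ((monomial α) cα + (monomial β) cβ) = 0 := by
    have hfun : (fun v : SymVar n => M v.1.1 v.1.2) = mval := funext hentry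
    rw [evalMat, hfun, map_add, eval_monomial, eval_monomial, hprodα, hprodβ]
    have hSa2 : Complex.exp Sa = Complex.exp Sb * w := by
      rw [show Sa = Sb + (Sa - Sb) by ring, Complex.exp_add, hexp]
    rw [hSa2, hw_def]
    field_simp
    ring
  exact hstab M hsymm hpos heval

/-- A binomial whose monomials have no common factor and whose total degrees
satisfy `deg Z^α > deg Z^β ≥ 1` is not psd-stable. -/
theorem non_homogeneous_binomial_not_psdStable {n : ℕ} (α β : SymVar n →₀ ℕ)
    (cα cβ : ℂ) (hcα : cα ≠ 0) (hcβ : cβ ≠ 0)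
    (hnc : ∀ v : SymVar n, α v = 0 ∨ β v = 0)
    (hdeg : mdeg β < mdeg α) (hβ : 1 ≤ mdeg β) :
    ¬ PsdStable (monomial α cα + monomial β cβ) := by
  classical
  have hAB : Disjoint α.support β.support := by
    rw [Finset.disjoint_left]
    intro v hvA hvB
    rcases hnc v with h | h
    · exact (Finsupp.mem_support_iff.mp hvA) h
    · exact (Finsupp.mem_support_iff.mp hvB) h
  set L : ℂ := Complex.log (-cβ/cα) with hL_def
  by_cases hcase : ∀ v ∈ α.support ∪ β.support, v.1.1 = v.1.2
  · -- all support variables are diagonal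
    have hBne : β.support.Nonempty := by
      rw [Finsupp.support_nonempty_iff]
      intro h0
      rw [h0] at hβ
      simp [mdeg] at hβ
    obtain ⟨u, huB⟩ := hBne
    set a : ℝ := (mdeg α : ℝ) with ha_def
    set b : ℝ := (mdeg β : ℝ) with hb_def
    have hb1 : (1:ℝ) ≤ b := by rw [hb_def]; exact_mod_cast hβ
    have hba : b + 1 ≤ a := by rw [ha_def, hb_def]; exact_mod_cast hdeg
    have hab0 : (0:ℝ) < a + b := by linarith
    set c : ℝ := L.im / Real.pi with hc_def
    set m : ℤ := ⌊(c + b)/2⌋ with hm_def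
    set x₁ : ℝ := c - 2*m with hx₁_def
    have hx₁l : -b ≤ x₁ := by
      have := Int.floor_le ((c + b)/2)
      rw [hx₁_def, hm_def]
      linarith
    have hx₁u : x₁ < -b + 2 := by
      have := Int.lt_floor_add_one ((c + b)/2)
      rw [hx₁_def, hm_def]
      linarith
    set x' : ℝ := if x₁ = -b then x₁ + 2 else x₁ with hx'_def
    set k : ℤ := if x₁ = -b then 1 - m else -m with hk_def
    have hx'l : -b < x' := by
      rw [hx'_def]
      by_cases h : x₁ = -b
      · rw [if_pos h, h]; linarith
      · rw [if_neg h]; exact lt_of_le_of_ne hx₁l (fun hh => h hh.symm)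
    have hx'u : x' < a := by
      rw [hx'_def]
      by_cases h : x₁ = -b
      · rw [if_pos h, h]; linarith
      · rw [if_neg h]; linarith
    have hπ : Real.pi ≠ 0 := ne_of_gt Real.pi_pos
    have hπx' : Real.pi * x' = L.im + 2*Real.pi*(k:ℝ) := by
      rw [hx'_def, hk_def]
      by_cases h : x₁ = -b
      · rw [if_pos h, if_pos h, hx₁_def, hc_def]
        push_cast
        field_simp
        ring
      · rw [if_neg h, if_neg h, hx₁_def, hc_def]
        push_cast
        field_simp
        ring
    set s : ℝ := (x' + b)/(a + b) with hs_def
    set s' : ℝ := (a - x')/(a + b) with hs'_def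
    have hs0 : 0 < s := by rw [hs_def]; apply div_pos <;> linarith
    have hs1 : s < 1 := by rw [hs_def, div_lt_one hab0]; linarith
    have hs'0 : 0 < s' := by rw [hs'_def]; apply div_pos <;> linarith
    have hs'1 : s' < 1 := by rw [hs'_def, div_lt_one hab0]; linarith
    set y : SymVar n → ℝ := fun v =>
      if v ∈ α.support then Real.pi*s else if v ∈ β.support then Real.pi*s' else 0 with hy_def
    apply consumer α β cα cβ hcα hcβ hnc hdeg y k u (Finset.mem_union_right _ huB)
    · intro v hv _
      by_cases hvA : v ∈ α.support
      · simp only [hy_def, if_pos hvA]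
        apply Real.sin_pos_of_pos_of_lt_pi
        · exact mul_pos Real.pi_pos hs0
        · nlinarith [Real.pi_pos]
      · have hvB : v ∈ β.support := by
          rcases Finset.mem_union.mp hv with h | h
          · exact absurd h hvA
          · exact h
        simp only [hy_def, if_neg hvA, if_pos hvB]
        apply Real.sin_pos_of_pos_of_lt_pi
        · exact mul_pos Real.pi_pos hs'0
        · nlinarith [Real.pi_pos]
    · intro v hv hvd _
      exact absurd (hcase v hv) hvd
    · rw [Finset.sum_union hAB]
      have hsa' : ∑ v ∈ α.support, (α v : ℝ) = a := by
        rw [ha_def, mdeg, Finsupp.sum]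
        push_cast
        rfl
      have hsb' : ∑ v ∈ β.support, (β v : ℝ) = b := by
        rw [hb_def, mdeg, Finsupp.sum]
        push_cast
        rfl
      have hA : ∑ v ∈ α.support, ((α v:ℝ) - β v) * y v = a * (Real.pi * s) := by
        have h1 : ∀ v ∈ α.support, ((α v:ℝ) - β v) * y v = (α v : ℝ) * (Real.pi * s) := by
          intro v hv
          have hβv : β v = 0 :=
            Finsupp.notMem_support_iff.mp (Finset.disjoint_left.mp hAB hv)
          simp only [hy_def, if_pos hv, hβv]
          push_cast
          ring
        rw [Finset.sum_congr rfl h1, ← Finset.sum_mul, hsa']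
      have hB : ∑ v ∈ β.support, ((α v:ℝ) - β v) * y v = -(b * (Real.pi * s')) := by
        have h1 : ∀ v ∈ β.support, ((α v:ℝ) - β v) * y v = -((β v : ℝ) * (Real.pi * s')) := by
          intro v hv
          have hvA : v ∉ α.support := Finset.disjoint_right.mp hAB hv
          have hαv : α v = 0 := Finsupp.notMem_support_iff.mp hvA
          simp only [hy_def, if_neg hvA, if_pos hv, hαv]
          push_cast
          ring
        rw [Finset.sum_congr rfl h1, Finset.sum_neg_distrib, ← Finset.sum_mul, hsb']
      rw [hA, hB]
      have hx'eq : a * (Real.pi * s) - b * (Real.pi * s') = Real.pi * x' := by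
        rw [hs_def, hs'_def]
        field_simp
        ring
      rw [← hL_def]
      linarith [hπx', hx'eq]
  · push_neg at hcase
    obtain ⟨u, huS, hud⟩ := hcase
    have he : ((α u : ℝ) - β u) ≠ 0 := by
      rcases Finset.mem_union.mp huS with h | h
      · have hβu : β u = 0 :=
          Finsupp.notMem_support_iff.mp (Finset.disjoint_left.mp hAB h)
        have hαu : α u ≠ 0 := Finsupp.mem_support_iff.mp h
        rw [hβu]
        have : (0:ℝ) < α u := by exact_mod_cast Nat.pos_of_ne_zero hαu
        push_cast
        linarith
      · have hαu : α u = 0 :=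
          Finsupp.notMem_support_iff.mp (Finset.disjoint_right.mp hAB h)
        have hβu : β u ≠ 0 := Finsupp.mem_support_iff.mp h
        rw [hαu]
        have : (0:ℝ) < β u := by exact_mod_cast Nat.pos_of_ne_zero hβu
        push_cast
        linarith
    set C : ℝ := ∑ v ∈ (α.support ∪ β.support).erase u,
      ((α v:ℝ) - β v) * (if v.1.1 = v.1.2 then Real.pi/2 else 0) with hC_def
    set τ : ℝ := (L.im - C)/((α u : ℝ) - β u) with hτ_def
    set y : SymVar n → ℝ := fun v =>
      if v = u then τ else if v.1.1 = v.1.2 then Real.pi/2 else 0 with hy_def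
    apply consumer α β cα cβ hcα hcβ hnc hdeg y 0 u huS
    · intro v hv hvd
      have hvu : v ≠ u := fun h => hud (h ▸ hvd)
      simp only [hy_def, if_neg hvu, if_pos hvd, Real.sin_pi_div_two]
      norm_num
    · intro v hv hvd hvu
      simp only [hy_def, if_neg hvu, if_neg hvd]
    · rw [← Finset.add_sum_erase _ _ huS]
      have h1 : ((α u:ℝ) - β u) * y u = L.im - C := by
        simp only [hy_def, if_pos rfl, hτ_def]
        field_simp
      have h2 : ∑ v ∈ (α.support ∪ β.support).erase u, ((α v:ℝ) - β v) * y v = C := by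
        rw [hC_def]
        refine Finset.sum_congr rfl (fun v hv => ?_)
        have hvu : v ≠ u := (Finset.mem_erase.mp hv).1
        simp only [hy_def, if_neg hvu]
      rw [h1, h2, ← hL_def]
      push_cast
      ring
end

section
/- Let f be a homogeneous non-mixed polynomial of total degree d ≥ 3 in the entries of a symmetric n×n matrix of variables Z, and assume that at least one off-diagonal monomial of f has a nonzero coefficient. Then f is not psd-stable. -/
open MvPolynomial

/-- A diagonal monomial: all variables occurring in it are diagonal variables
(constants count as diagonal monomials). -/
def IsDiagMonomial {n : ℕ} (α : SymVar n →₀ ℕ) : Prop :=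
  ∀ v : SymVar n, α v ≠ 0 → v.1.1 = v.1.2

/-- An off-diagonal monomial: non-constant, and all variables occurring in it
are off-diagonal variables. -/
def IsOffMonomial {n : ℕ} (α : SymVar n →₀ ℕ) : Prop :=
  α ≠ 0 ∧ ∀ v : SymVar n, α v ≠ 0 → v.1.1 ≠ v.1.2

/-- A polynomial is non-mixed if every monomial appearing in it is either a
diagonal monomial or an off-diagonal monomial. -/
def NonMixed {n : ℕ} (f : MvPolynomial (SymVar n) ℂ) : Prop :=
  ∀ α ∈ f.support, IsDiagMonomial α ∨ IsOffMonomial α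


lemma exists_upper_root (d : ℕ) (hd : 3 ≤ d) (τ : ℂ) (hτ : τ ≠ 0) :
    ∃ ζ : ℂ, 0 < ζ.im ∧ ζ ^ d = τ := by
  have hd3 : (3:ℝ) ≤ (d:ℝ) := by exact_mod_cast hd
  have hdpos : (0:ℝ) < d := by linarith
  have pi_pos := Real.pi_pos
  set a := Complex.arg τ with ha
  have ha1 : -Real.pi < a := Complex.neg_pi_lt_arg τ
  have ha2 : a ≤ Real.pi := Complex.arg_le_pi τ
  set θ : ℝ := if 0 < a then a / d else (a + 2 * Real.pi) / d with hθ
  have hθpos : 0 < θ := by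
    rw [hθ]; split_ifs with h
    · positivity
    · apply div_pos; nlinarith; exact hdpos
  have hθlt : θ < Real.pi := by
    rw [hθ]; split_ifs with h
    · rw [div_lt_iff₀ hdpos]; nlinarith
    · rw [div_lt_iff₀ hdpos]; push_neg at h; nlinarith
  have hdθ : (d:ℝ) * θ = a ∨ (d:ℝ) * θ = a + 2 * Real.pi := by
    rw [hθ]; split_ifs with h
    · left; field_simp
    · right; field_simp
  set R : ℝ := (‖τ‖) ^ ((d:ℝ)⁻¹) with hR
  have habs : 0 < ‖τ‖ := norm_pos_iff.mpr hτ
  have hRpos : 0 < R := Real.rpow_pos_of_pos habs _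
  refine ⟨(R:ℂ) * Complex.exp (θ * Complex.I), ?_, ?_⟩
  · have : ((R:ℂ) * Complex.exp (θ * Complex.I)).im = R * Real.sin θ := by
      rw [Complex.exp_mul_I]
      simp [Complex.mul_im, Complex.add_im, Complex.ofReal_cos, Complex.ofReal_sin, Complex.sin_ofReal_re]
    rw [this]
    exact mul_pos hRpos (Real.sin_pos_of_pos_of_lt_pi hθpos hθlt)
  · rw [mul_pow, ← Complex.exp_nat_mul]
    have hRd : ((R:ℂ))^d = ((‖τ‖ : ℝ) : ℂ) := by
      rw [← Complex.ofReal_pow]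
      congr 1
      rw [hR, ← Real.rpow_natCast (‖τ‖ ^ ((d:ℝ)⁻¹)) d, ← Real.rpow_mul habs.le]
      rw [inv_mul_cancel₀ (ne_of_gt hdpos), Real.rpow_one]
    rw [hRd]
    have hexp : Complex.exp ((d:ℂ) * ((θ:ℂ) * Complex.I)) = Complex.exp ((a:ℂ) * Complex.I) := by
      rcases hdθ with h | h
      · congr 1
        rw [← mul_assoc, ← Complex.ofReal_natCast, ← Complex.ofReal_mul, h]
      · rw [← mul_assoc, ← Complex.ofReal_natCast, ← Complex.ofReal_mul, h]
        push_cast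
        rw [add_mul, Complex.exp_add, Complex.exp_two_pi_mul_I, mul_one]
    rw [hexp, ha, Complex.norm_mul_exp_arg_mul_I]


lemma exists_real_eval_ne_zero {σ : Type*} (g : MvPolynomial σ ℂ) (hg : g ≠ 0) :
    ∃ x : σ → ℝ, eval (fun v => (x v : ℂ)) g ≠ 0 := by
  classical
  by_contra h
  push_neg at h
  apply hg
  set g₁ : MvPolynomial σ ℝ := ∑ α ∈ g.support, monomial α ((coeff α g).re) with hg₁
  set g₂ : MvPolynomial σ ℝ := ∑ α ∈ g.support, monomial α ((coeff α g).im) with hg₂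
  have hprod : ∀ (x : σ → ℝ) (α : σ →₀ ℕ),
      (∏ v ∈ α.support, ((x v : ℂ)) ^ α v) = ((∏ v ∈ α.support, x v ^ α v : ℝ) : ℂ) := by
    intro x α
    push_cast
    rfl
  have hev1 : ∀ x : σ → ℝ, eval x g₁ = (eval (fun v => ((x v : ℂ))) g).re := by
    intro x
    rw [eval_eq (fun v => ((x v : ℂ))) g, Complex.re_sum, hg₁, map_sum]
    refine Finset.sum_congr rfl fun α hα => ?_
    rw [eval_monomial]
    simp only [Finsupp.prod]
    rw [hprod x α]
    simp only [Complex.mul_re, Complex.ofReal_re, Complex.ofReal_im, mul_zero, sub_zero]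
  have hev2 : ∀ x : σ → ℝ, eval x g₂ = (eval (fun v => ((x v : ℂ))) g).im := by
    intro x
    rw [eval_eq (fun v => ((x v : ℂ))) g, Complex.im_sum, hg₂, map_sum]
    refine Finset.sum_congr rfl fun α hα => ?_
    rw [eval_monomial]
    simp only [Finsupp.prod]
    rw [hprod x α]
    simp only [Complex.mul_im, Complex.ofReal_re, Complex.ofReal_im, mul_zero, zero_add]
  have hz1 : g₁ = 0 := MvPolynomial.funext (fun x => by rw [hev1 x, h x]; simp)
  have hz2 : g₂ = 0 := MvPolynomial.funext (fun x => by rw [hev2 x, h x]; simp)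
  have hc : ∀ (c : ℂ → ℝ) (α : σ →₀ ℕ),
      coeff α (∑ β ∈ g.support, monomial β (c (coeff β g))) = if α ∈ g.support then c (coeff α g) else 0 := by
    intro c α
    rw [coeff_sum]
    simp only [coeff_monomial]
    exact Finset.sum_ite_eq' g.support α (fun β => c (coeff β g))
  ext α
  by_cases hα : α ∈ g.support
  · have h1 : (coeff α g).re = 0 := by
      have := hc Complex.re α
      rw [← hg₁, hz1] at this
      simpa [hα] using this.symm
    have h2 : (coeff α g).im = 0 := by
      have := hc Complex.im α
      rw [← hg₂, hz2] at this
      simpa [hα] using this.symm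
    simp [Complex.ext_iff, h1, h2]
  · simpa using (MvPolynomial.notMem_support_iff.mp hα)

/-- A homogeneous non-mixed polynomial of degree `d ≥ 3` with at least one
off-diagonal monomial is not psd-stable. -/
theorem homogeneous_nonMixed_not_psdStable {n d : ℕ}
    (f : MvPolynomial (SymVar n) ℂ) (hd : 3 ≤ d)
    (hhom : f.IsHomogeneous d) (hnm : NonMixed f)
    (hoff : ∃ α ∈ f.support, IsOffMonomial α) :
    ¬ PsdStable f := by
  classical
  intro hstable
  obtain ⟨α₀, hα₀f, hα₀off⟩ := hoff
  set D : Finset (SymVar n →₀ ℕ) := f.support.filter (fun α => IsDiagMonomial α) with hD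
  set O : Finset (SymVar n →₀ ℕ) := f.support.filter (fun α => ¬ IsDiagMonomial α) with hO
  have hOoff : ∀ α ∈ O, IsOffMonomial α := by
    intro α hα
    rw [hO, Finset.mem_filter] at hα
    exact (hnm α hα.1).resolve_left hα.2
  set g : MvPolynomial (SymVar n) ℂ := ∑ α ∈ O, monomial α (coeff α f) with hg
  set A : ℂ := ∑ α ∈ D, coeff α f with hA
  -- the key evaluation identity
  have key : ∀ (x : SymVar n → ℝ) (ζ : ℂ), 0 < ζ.im →
      ζ ^ d * A + eval (fun v => ((x v : ℂ))) g = 0 → False := by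
    intro x ζ hζ heq
    set M : Matrix (Fin n) (Fin n) ℂ := fun i j =>
      if i = j then ζ else
        if h : i ≤ j then ((x ⟨(i,j), h⟩ : ℝ) : ℂ) else ((x ⟨(j,i), le_of_not_ge h⟩ : ℝ) : ℂ)
      with hM
    have hsymm : M.IsSymm := by
      apply Matrix.IsSymm.ext
      intro i j
      by_cases hij : i = j
      · subst hij; rfl
      · have hji : j ≠ i := fun hh => hij hh.symm
        rcases le_total i j with hle | hle
        · have : ¬ j ≤ i := fun hh => hij (le_antisymm hle hh)
          simp [hM, hij, hji, hle, this]
        · have : ¬ i ≤ j := fun hh => hij (le_antisymm hh hle)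
          simp [hM, hij, hji, hle, this]
    have hmap : M.map Complex.im = Matrix.diagonal (fun _ => ζ.im) := by
      ext i j
      by_cases hij : i = j
      · subst hij; rw [Matrix.map_apply]; simp [hM]
      · by_cases hle : i ≤ j
        · rw [Matrix.map_apply]; simp [hM, hij, hle, Matrix.diagonal_apply_ne _ hij]
        · rw [Matrix.map_apply]; simp [hM, hij, hle, Matrix.diagonal_apply_ne _ hij]
    have hpd : (M.map Complex.im).PosDef := by
      rw [hmap, Matrix.posDef_diagonal_iff]
      intro i; exact hζ
    -- evaluation point
    set e : SymVar n → ℂ := fun v => if v.1.1 = v.1.2 then ζ else ((x v : ℝ) : ℂ) with he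
    have hMe : (fun v : SymVar n => M v.1.1 v.1.2) = e := by
      funext v
      by_cases hv : v.1.1 = v.1.2
      · simp [hM, he, hv]
      · have hle : v.1.1 ≤ v.1.2 := v.2
        have hsub : (⟨(v.1.1, v.1.2), hle⟩ : SymVar n) = v := by
          apply Subtype.ext
          exact Prod.mk.eta
        simp [hM, he, hv, hle, hsub]
    have hev : evalMat M f = ζ ^ d * A + eval (fun v => ((x v : ℂ))) g := by
      unfold evalMat
      rw [hMe, eval_eq]
      rw [← Finset.sum_filter_add_sum_filter_not f.support (fun α => IsDiagMonomial α)]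
      congr 1
      · -- diagonal part
        rw [hA, Finset.mul_sum]
        refine Finset.sum_congr rfl fun α hα => ?_
        rw [Finset.mem_filter] at hα
        have hdeg : ∑ v ∈ α.support, α v = d := by
          have hc : coeff α f ≠ 0 := MvPolynomial.mem_support_iff.mp hα.1
          have := hhom hc
          rw [show (1 : SymVar n → ℕ) = fun _ => 1 from rfl, ← Finsupp.degree_eq_weight_one] at this
          exact this
        have : ∏ v ∈ α.support, e v ^ α v = ζ ^ d := by
          rw [← hdeg, ← Finset.prod_pow_eq_pow_sum]
          refine Finset.prod_congr rfl fun v hv => ?_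
          have hα0 : α v ≠ 0 := Finsupp.mem_support_iff.mp hv
          rw [he]
          simp [hα.2 v hα0]
        rw [this]
        ring
      · -- off part
        rw [hg, map_sum]
        refine Finset.sum_congr rfl fun α hα => ?_
        rw [eval_monomial]
        congr 1
        rw [Finsupp.prod]
        refine Finset.prod_congr rfl fun v hv => ?_
        have hα0 : α v ≠ 0 := Finsupp.mem_support_iff.mp hv
        have hαO : α ∈ O := by rw [hO]; exact hα
        have hoffv := (hOoff α hαO).2 v hα0
        rw [he]
        simp [hoffv]
    exact hstable M hsymm hpd (by rw [hev, heq])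
  -- now produce the witness
  by_cases hA0 : A = 0
  · refine key 0 Complex.I (by simp) ?_
    have hgz : eval (fun v => (((0 : SymVar n → ℝ) v : ℝ) : ℂ)) g = 0 := by
      rw [hg, map_sum]
      refine Finset.sum_eq_zero fun α hα => ?_
      rw [eval_monomial]
      have hne : α ≠ 0 := (hOoff α hα).1
      obtain ⟨v, hv⟩ : ∃ v, α v ≠ 0 := by
        by_contra hc; push_neg at hc
        exact hne (Finsupp.ext fun v => hc v)
      have hvs : v ∈ α.support := Finsupp.mem_support_iff.mpr hv
      rw [Finsupp.prod]
      rw [Finset.prod_eq_zero hvs (by simp [zero_pow hv])]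
      ring
    rw [hgz, hA0]
    ring
  · -- A ≠ 0
    have hgne : g ≠ 0 := by
      intro hgz
      have hα₀O : α₀ ∈ O := by
        rw [hO, Finset.mem_filter]
        refine ⟨hα₀f, fun hdiag => ?_⟩
        obtain ⟨v, hv⟩ : ∃ v, α₀ v ≠ 0 := by
          by_contra hc; push_neg at hc
          exact hα₀off.1 (Finsupp.ext fun v => hc v)
        exact hα₀off.2 v hv (hdiag v hv)
      have : coeff α₀ g = coeff α₀ f := by
        rw [hg, coeff_sum]
        simp only [coeff_monomial]
        rw [Finset.sum_ite_eq' O α₀ (fun β => coeff β f)]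
        simp [hα₀O]
      rw [hgz] at this
      exact MvPolynomial.mem_support_iff.mp hα₀f this.symm
    obtain ⟨x, hx⟩ := exists_real_eval_ne_zero g hgne
    set w : ℂ := eval (fun v => ((x v : ℂ))) g with hw
    have hτ : -w / A ≠ 0 := by
      apply div_ne_zero
      · simpa using hx
      · exact hA0
    obtain ⟨ζ, hζim, hζd⟩ := exists_upper_root d hd (-w / A) hτ
    refine key x ζ hζim ?_
    rw [hζd, ← hw]
    field_simp
    ring
end
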